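/- For the Zagreb index Z_n of a plane-oriented recursive tree, the sequence M_n = (2/(n−1)) Z_n − 4(Ψ(n) + γ) for n ≥ 2 is a martingale with respect to the natural filtration: E[M_n | F_{n−1}] = M_{n−1} for n ≥ 3. -/

import Mathlib

open MeasureTheory in
/-- Martingale property for the Zagreb index of a PORT.  With `Zn = Z_n` the Zagreb
index at time `n ≥ 3`, `Zprev = Z_{n−1}`, and `m ≤ m0` the σ-field `F_{n−1}`, the
conditional-expectation identity `E[Z_n | F_{n−1}] = ((n−1)/(n−2)) Z_{n−1} + 2`
implies `E[(2/(n−1)) Z_n − 4H_{n−1} | F_{n−1}] = (2/(n−2)) Z_{n−1} − 4H_{n−2}`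
(with `Ψ(n) + γ = H_{n−1}`); that is, `M_n = (2/(n−1)) Z_n − 4(Ψ(n) + γ)` is a
martingale. -/
theorem port_zagreb_martingale {Ω : Type*} {m m0 : MeasurableSpace Ω}
    (hm : m ≤ m0) (μ : Measure Ω) [IsProbabilityMeasure μ]
    (n : ℕ) (hn : 3 ≤ n) (Zn Zprev : Ω → ℝ)
    (hZn : Integrable Zn μ) (hZprev : Integrable Zprev μ)
    (hmeas : StronglyMeasurable[m] Zprev)
    (hcond : μ[Zn|m] =ᵐ[μ] fun ω => ((n : ℝ) - 1) / ((n : ℝ) - 2) * Zprev ω + 2) :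
    μ[fun ω => 2 / ((n : ℝ) - 1) * Zn ω - 4 * (harmonic (n - 1) : ℝ)|m] =ᵐ[μ]
      fun ω => 2 / ((n : ℝ) - 2) * Zprev ω - 4 * (harmonic (n - 2) : ℝ) := by
  have hn1 : ((n : ℝ) - 1) ≠ 0 := by
    have : (3 : ℝ) ≤ (n : ℝ) := by exact_mod_cast hn
    linarith
  have hn2 : ((n : ℝ) - 2) ≠ 0 := by
    have : (3 : ℝ) ≤ (n : ℝ) := by exact_mod_cast hn
    linarith
  -- harmonic identity
  have hnn : n - 1 = (n - 2) + 1 := by omega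
  have hharm : (harmonic (n - 1) : ℝ) = (harmonic (n - 2) : ℝ) + 1 / ((n : ℝ) - 1) := by
    rw [hnn, harmonic_succ]
    push_cast
    have : ((n : ℝ) - 2 + 1) = (n : ℝ) - 1 := by ring
    rw [Nat.cast_sub (by omega)]
    push_cast
    ring
  have hsub : μ[fun ω => 2 / ((n : ℝ) - 1) * Zn ω - 4 * (harmonic (n - 1) : ℝ)|m]
      =ᵐ[μ] fun ω => (μ[fun ω => 2 / ((n : ℝ) - 1) * Zn ω|m]) ω
        - (μ[fun _ : Ω => 4 * (harmonic (n - 1) : ℝ)|m]) ω :=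
    condExp_sub (hZn.const_mul _) (integrable_const _) m
  have hmul : μ[fun ω => 2 / ((n : ℝ) - 1) * Zn ω|m]
      =ᵐ[μ] fun ω => 2 / ((n : ℝ) - 1) * (μ[Zn|m]) ω := by
    have := condExp_smul (μ := μ) (m := m) (2 / ((n : ℝ) - 1)) Zn
    simpa [smul_eq_mul, Pi.smul_def] using this
  have hconst : μ[fun _ : Ω => 4 * (harmonic (n - 1) : ℝ)|m]
      = fun _ => 4 * (harmonic (n - 1) : ℝ) := condExp_const hm _
  filter_upwards [hsub, hmul, hcond] with ω h1 h2 h3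
  rw [h1, h2, h3, hconst, hharm]
  field_simp
  ring
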